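/- arXiv:2604.07686 — 4 statements merged into one kernel-verified Lean document; each statement's English description precedes it below -/
import Mathlib

section
/- If ψ : ℝⁿ → ℝ is η-weakly convex and L-Lipschitz continuous, then for any 0 < μ₂ < μ₁ < 1/η and any z ∈ ℝⁿ, the Moreau envelopes satisfy ψ^{μ₁}(z) ≤ ψ^{μ₂}(z) ≤ ψ^{μ₁}(z) + (μ₁ − μ₂)L². -/
open Filter Topology

noncomputable def moreauEnv {E : Type*} [NormedAddCommGroup E] (μ : ℝ) (ψ : E → ℝ)
    (w : E) : ℝ :=
  ⨅ v, (ψ v + (1 / (2 * μ)) * ‖v - w‖ ^ 2)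

lemma key_alg (L μ₁ μ₂ r : ℝ) (hL : 0 ≤ L) (h0 : 0 < μ₂) (h21 : μ₂ < μ₁) (hr : 0 ≤ r) :
    L * ((1 - μ₂ / μ₁) * r) + (1 / (2 * μ₂)) * ((μ₂ / μ₁) * r) ^ 2 ≤
      (1 / (2 * μ₁)) * r ^ 2 + (μ₁ - μ₂) * L ^ 2 := by
  have hμ₁ : 0 < μ₁ := h0.trans h21
  rw [← sub_nonneg]
  have he : 1 / (2 * μ₁) * r ^ 2 + (μ₁ - μ₂) * L ^ 2 -
      (L * ((1 - μ₂ / μ₁) * r) + 1 / (2 * μ₂) * (μ₂ / μ₁ * r) ^ 2) =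
      (μ₁ - μ₂) * ((r - μ₁ * L) ^ 2 / (2 * μ₁ ^ 2) + L ^ 2 / 2) := by
    field_simp
    ring
  rw [he]
  exact mul_nonneg (by linarith) (by positivity)

theorem stmt1 {n : ℕ} (ψ : EuclideanSpace ℝ (Fin n) → ℝ) (η L μ₁ μ₂ : ℝ)
    (hη : 0 < η) (hL : 0 ≤ L)
    (hwc : ConvexOn ℝ Set.univ (fun x => ψ x + η / 2 * ‖x‖ ^ 2))
    (hlip : ∀ x y, |ψ x - ψ y| ≤ L * ‖x - y‖)
    (h0 : 0 < μ₂) (h21 : μ₂ < μ₁) (h1 : μ₁ < η⁻¹) (z : EuclideanSpace ℝ (Fin n)) :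
    moreauEnv μ₁ ψ z ≤ moreauEnv μ₂ ψ z ∧
      moreauEnv μ₂ ψ z ≤ moreauEnv μ₁ ψ z + (μ₁ - μ₂) * L ^ 2 := by
  have hμ₁ : 0 < μ₁ := h0.trans h21
  have lb : ∀ μ : ℝ, 0 < μ → ∀ v, ψ z - μ * L ^ 2 / 2 ≤ ψ v + (1 / (2 * μ)) * ‖v - z‖ ^ 2 := by
    intro μ hμ v
    have h1 := (abs_le.mp (hlip z v)).2
    have h2 : ψ z - ψ v ≤ L * ‖v - z‖ := by rwa [norm_sub_rev] at h1
    set r := ‖v - z‖ with hrdef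
    have hr : 0 ≤ r := norm_nonneg _
    have hq : 0 ≤ (1 / (2 * μ)) * r ^ 2 - L * r + μ * L ^ 2 / 2 := by
      have he : (1 / (2 * μ)) * r ^ 2 - L * r + μ * L ^ 2 / 2 = (r - μ * L) ^ 2 / (2 * μ) := by
        field_simp; ring
      rw [he]; positivity
    linarith
  have bdd : ∀ μ : ℝ, 0 < μ →
      BddBelow (Set.range fun v => ψ v + (1 / (2 * μ)) * ‖v - z‖ ^ 2) := by
    intro μ hμ
    exact ⟨ψ z - μ * L ^ 2 / 2, Set.forall_mem_range.mpr (lb μ hμ)⟩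
  unfold moreauEnv
  constructor
  · refine ciInf_mono (bdd μ₁ hμ₁) fun v => ?_
    have : (1 : ℝ) / (2 * μ₁) ≤ 1 / (2 * μ₂) := by
      apply one_div_le_one_div_of_le <;> linarith
    have := mul_le_mul_of_nonneg_right this (sq_nonneg ‖v - z‖)
    linarith
  · rw [← sub_le_iff_le_add]
    refine le_ciInf fun v => ?_
    rw [sub_le_iff_le_add]
    set t : ℝ := μ₂ / μ₁ with htdef
    have ht0 : 0 < t := div_pos h0 hμ₁
    have ht1 : t < 1 := (div_lt_one hμ₁).mpr h21
    set w : EuclideanSpace ℝ (Fin n) := z + t • (v - z) with hwdef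
    have hwz : w - z = t • (v - z) := by rw [hwdef]; abel
    have hwv : w - v = (t - 1) • (v - z) := by rw [hwdef]; module
    have hnwz : ‖w - z‖ = t * ‖v - z‖ := by
      rw [hwz, norm_smul, Real.norm_eq_abs, abs_of_pos ht0]
    have hnwv : ‖w - v‖ = (1 - t) * ‖v - z‖ := by
      rw [hwv, norm_smul, Real.norm_eq_abs, abs_of_neg (by linarith : t - 1 < 0)]
      ring
    have hψw : ψ w ≤ ψ v + L * ((1 - t) * ‖v - z‖) := by
      have := (abs_le.mp (hlip w v)).2
      rw [hnwv] at this; linarith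
    calc ⨅ v, (ψ v + 1 / (2 * μ₂) * ‖v - z‖ ^ 2)
        ≤ ψ w + 1 / (2 * μ₂) * ‖w - z‖ ^ 2 := ciInf_le (bdd μ₂ h0) w
      _ ≤ ψ v + L * ((1 - t) * ‖v - z‖) + 1 / (2 * μ₂) * (t * ‖v - z‖) ^ 2 := by
          rw [hnwz]; linarith
      _ ≤ ψ v + 1 / (2 * μ₁) * ‖v - z‖ ^ 2 + (μ₁ - μ₂) * L ^ 2 := by
          have := key_alg L μ₁ μ₂ ‖v - z‖ hL h0 h21 (norm_nonneg _)
          rw [htdef]; linarith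
end

section
/- Let ψ : ℝⁿ → ℝ be convex and L_ψ-Lipschitz continuous, and let 𝓕 : ℝ^d → ℝⁿ be differentiable with L_{D𝓕}-Lipschitz continuous Fréchet derivative (in operator norm). Then the composition ψ ∘ 𝓕 is (L_ψ L_{D𝓕})-weakly convex, i.e., ψ ∘ 𝓕 + (L_ψ L_{D𝓕}/2)‖·‖² is convex. -/
open Filter Topology intervalIntegral RealInnerProductSpace

lemma taylor_aux {d n : ℕ}
    (𝓕 : EuclideanSpace ℝ (Fin d) → EuclideanSpace ℝ (Fin n))
    (D : EuclideanSpace ℝ (Fin d) →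
      (EuclideanSpace ℝ (Fin d) →L[ℝ] EuclideanSpace ℝ (Fin n)))
    (LD : ℝ) (hLD : 0 ≤ LD)
    (hD : ∀ x, HasFDerivAt 𝓕 (D x) x)
    (hDlip : ∀ x y, ‖D x - D y‖ ≤ LD * ‖x - y‖) (a b : EuclideanSpace ℝ (Fin d)) :
    ‖𝓕 b - 𝓕 a - D a (b - a)‖ ≤ LD / 2 * ‖b - a‖ ^ 2 := by
  set v := b - a with hv
  set g : ℝ → EuclideanSpace ℝ (Fin n) := fun t => 𝓕 (a + t • v) - t • (D a v) with hg
  have hDcont : Continuous D := by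
    rcases le_or_gt LD 0 with h | h
    · have : ∀ x y : EuclideanSpace ℝ (Fin d), D x = D y := by
        intro x y
        have := hDlip x y
        have h2 : ‖D x - D y‖ ≤ 0 := this.trans (mul_nonpos_of_nonpos_of_nonneg h (norm_nonneg _))
        have := norm_nonneg (D x - D y)
        have : ‖D x - D y‖ = 0 := le_antisymm h2 this
        simpa [sub_eq_zero] using norm_eq_zero.mp this
      exact continuous_const.congr fun x => (this (Classical.arbitrary _) x)
    · exact (LipschitzWith.of_dist_le_mul (K := ⟨LD, h.le⟩) (fun x y => by
        rw [dist_eq_norm, dist_eq_norm]; exact hDlip x y)).continuous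
  have hg' : ∀ t : ℝ, HasDerivAt g (D (a + t • v) v - D a v) t := by
    intro t
    have h1 : HasDerivAt (fun t : ℝ => a + t • v) v t := by
      simpa using ((hasDerivAt_id t).smul_const v).const_add a
    have h2 : HasDerivAt (fun t : ℝ => 𝓕 (a + t • v)) (D (a + t • v) v) t := by
      exact (hD (a + t • v)).comp_hasDerivAt t h1
    have h3 := h2.sub ((hasDerivAt_id t).smul_const (D a v))
    rw [one_smul] at h3
    exact h3
  have hcont : Continuous fun t : ℝ => D (a + t • v) v - D a v := by
    have : Continuous fun t : ℝ => D (a + t • v) :=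
      hDcont.comp (by continuity)
    exact ((ContinuousLinearMap.apply ℝ _ v).continuous.comp this).sub continuous_const
  have hint : g 1 - g 0 = ∫ t in (0:ℝ)..1, (D (a + t • v) v - D a v) :=
    (integral_eq_sub_of_hasDerivAt (fun t _ => hg' t)
      (hcont.intervalIntegrable 0 1)).symm
  have hgval : g 1 - g 0 = 𝓕 b - 𝓕 a - D a v := by
    simp [hg, hv]
    abel
  have hbound : ‖∫ t in (0:ℝ)..1, (D (a + t • v) v - D a v)‖ ≤
      |∫ t in (0:ℝ)..1, LD * t * ‖v‖ ^ 2| := by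
    apply intervalIntegral.norm_integral_le_abs_of_norm_le
    · rw [Set.uIoc_of_le (zero_le_one' ℝ)]
      filter_upwards [MeasureTheory.ae_restrict_mem measurableSet_Ioc] with t ht
      have h1 : ‖(D (a + t • v) - D a) v‖ ≤ ‖D (a + t • v) - D a‖ * ‖v‖ :=
        (D (a + t • v) - D a).le_opNorm v
      have h2 : ‖D (a + t • v) - D a‖ ≤ LD * ‖t • v‖ := by simpa using hDlip (a + t • v) a
      have h3 : ‖t • v‖ = t * ‖v‖ := by
        rw [norm_smul, Real.norm_eq_abs, abs_of_pos ht.1]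
      calc ‖D (a + t • v) v - D a v‖ = ‖(D (a + t • v) - D a) v‖ := by
            simp [ContinuousLinearMap.sub_apply]
        _ ≤ ‖D (a + t • v) - D a‖ * ‖v‖ := h1
        _ ≤ LD * ‖t • v‖ * ‖v‖ := by
            exact mul_le_mul_of_nonneg_right h2 (norm_nonneg v)
        _ = LD * t * ‖v‖ ^ 2 := by rw [h3]; ring
    · exact ((continuous_const.mul continuous_id).mul continuous_const).intervalIntegrable 0 1
  have hval : (∫ t in (0:ℝ)..1, LD * t * ‖v‖ ^ 2) = LD / 2 * ‖v‖ ^ 2 := by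
    have : (fun t : ℝ => LD * t * ‖v‖ ^ 2) = fun t : ℝ => (LD * ‖v‖ ^ 2) * t := by
      funext t; ring
    rw [this, intervalIntegral.integral_const_mul, integral_id]
    ring
  calc ‖𝓕 b - 𝓕 a - D a (b - a)‖ = ‖g 1 - g 0‖ := by rw [hgval]
    _ ≤ |∫ t in (0:ℝ)..1, LD * t * ‖v‖ ^ 2| := by rw [hint]; exact hbound
    _ = LD / 2 * ‖b - a‖ ^ 2 := by
        rw [hval, abs_of_nonneg]
        positivity
set_option maxHeartbeats 1000000 in
theorem stmt6 {d n : ℕ} (ψ : EuclideanSpace ℝ (Fin n) → ℝ)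
    (𝓕 : EuclideanSpace ℝ (Fin d) → EuclideanSpace ℝ (Fin n))
    (D : EuclideanSpace ℝ (Fin d) →
      (EuclideanSpace ℝ (Fin d) →L[ℝ] EuclideanSpace ℝ (Fin n)))
    (Lψ LD : ℝ) (hLψ : 0 ≤ Lψ) (hLD : 0 ≤ LD)
    (hconv : ConvexOn ℝ Set.univ ψ)
    (hlip : ∀ x y, |ψ x - ψ y| ≤ Lψ * ‖x - y‖)
    (hD : ∀ x, HasFDerivAt 𝓕 (D x) x)
    (hDlip : ∀ x y, ‖D x - D y‖ ≤ LD * ‖x - y‖) :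
    ConvexOn ℝ Set.univ (fun x => ψ (𝓕 x) + Lψ * LD / 2 * ‖x‖ ^ 2) := by
  refine ⟨convex_univ, ?_⟩
  intro x _ y _ a b ha hb hab
  have hb1 : b = 1 - a := by linarith
  simp only [smul_eq_mul]
  have hxz : x - (a • x + b • y) = b • (x - y) := by rw [hb1]; module
  have hyz : y - (a • x + b • y) = a • (y - x) := by rw [hb1]; module
  have hsum : a • (x - (a • x + b • y)) + b • (y - (a • x + b • y))
      = (0 : EuclideanSpace ℝ (Fin d)) := by rw [hb1]; module
  have hD0 : a • D (a • x + b • y) (x - (a • x + b • y))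
      + b • D (a • x + b • y) (y - (a • x + b • y)) = (0 : EuclideanSpace ℝ (Fin n)) := by
    have := congrArg (D (a • x + b • y)) hsum
    simpa [map_add, map_smul] using this
  have hE : a • 𝓕 x + b • 𝓕 y - 𝓕 (a • x + b • y) =
      a • (𝓕 x - 𝓕 (a • x + b • y) - D (a • x + b • y) (x - (a • x + b • y)))
      + b • (𝓕 y - 𝓕 (a • x + b • y) - D (a • x + b • y) (y - (a • x + b • y))) := by
    have h1 : a • (𝓕 x - 𝓕 (a • x + b • y) - D (a • x + b • y) (x - (a • x + b • y)))
        + b • (𝓕 y - 𝓕 (a • x + b • y) - D (a • x + b • y) (y - (a • x + b • y))) =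
        a • 𝓕 x + b • 𝓕 y - 𝓕 (a • x + b • y)
        - (a • D (a • x + b • y) (x - (a • x + b • y))
          + b • D (a • x + b • y) (y - (a • x + b • y))) := by
      rw [hb1]; module
    rw [h1, hD0, sub_zero]
  have hTx := taylor_aux 𝓕 D LD hLD hD hDlip (a • x + b • y) x
  have hTy := taylor_aux 𝓕 D LD hLD hD hDlip (a • x + b • y) y
  have hnxz : ‖x - (a • x + b • y)‖ = b * ‖x - y‖ := by
    rw [hxz, norm_smul, Real.norm_eq_abs, abs_of_nonneg hb]
  have hnyz : ‖y - (a • x + b • y)‖ = a * ‖x - y‖ := by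
    rw [hyz, norm_smul, Real.norm_eq_abs, abs_of_nonneg ha, norm_sub_rev]
  have hEnorm : ‖a • 𝓕 x + b • 𝓕 y - 𝓕 (a • x + b • y)‖
      ≤ LD / 2 * (a * b) * ‖x - y‖ ^ 2 := by
    rw [hE]
    calc ‖a • (𝓕 x - 𝓕 (a • x + b • y) - D (a • x + b • y) (x - (a • x + b • y)))
          + b • (𝓕 y - 𝓕 (a • x + b • y) - D (a • x + b • y) (y - (a • x + b • y)))‖
        ≤ ‖a • (𝓕 x - 𝓕 (a • x + b • y) - D (a • x + b • y) (x - (a • x + b • y)))‖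
          + ‖b • (𝓕 y - 𝓕 (a • x + b • y) - D (a • x + b • y) (y - (a • x + b • y)))‖ :=
          norm_add_le _ _
      _ = a * ‖𝓕 x - 𝓕 (a • x + b • y) - D (a • x + b • y) (x - (a • x + b • y))‖
          + b * ‖𝓕 y - 𝓕 (a • x + b • y) - D (a • x + b • y) (y - (a • x + b • y))‖ := by
          rw [norm_smul, norm_smul, Real.norm_eq_abs, Real.norm_eq_abs,
            abs_of_nonneg ha, abs_of_nonneg hb]
      _ ≤ a * (LD / 2 * ‖x - (a • x + b • y)‖ ^ 2)
          + b * (LD / 2 * ‖y - (a • x + b • y)‖ ^ 2) := by gcongr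
      _ = LD / 2 * (a * b) * ‖x - y‖ ^ 2 := by rw [hnxz, hnyz, hb1]; ring
  have hψ1 : ψ (𝓕 (a • x + b • y)) ≤ ψ (a • 𝓕 x + b • 𝓕 y)
      + Lψ * ‖a • 𝓕 x + b • 𝓕 y - 𝓕 (a • x + b • y)‖ := by
    have h := hlip (𝓕 (a • x + b • y)) (a • 𝓕 x + b • 𝓕 y)
    rw [norm_sub_rev] at h
    have := (abs_le.mp h).2
    linarith
  have hψ2 : ψ (a • 𝓕 x + b • 𝓕 y) ≤ a * ψ (𝓕 x) + b * ψ (𝓕 y) := by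
    have := hconv.2 (Set.mem_univ (𝓕 x)) (Set.mem_univ (𝓕 y)) ha hb hab
    simpa using this
  have hψ : ψ (𝓕 (a • x + b • y)) ≤ a * ψ (𝓕 x) + b * ψ (𝓕 y)
      + Lψ * (LD / 2 * (a * b) * ‖x - y‖ ^ 2) := by
    have h3 := mul_le_mul_of_nonneg_left hEnorm hLψ
    linarith
  have hid : a * ‖x‖ ^ 2 + b * ‖y‖ ^ 2 - ‖a • x + b • y‖ ^ 2 = a * b * ‖x - y‖ ^ 2 := by
    simp only [← real_inner_self_eq_norm_sq, inner_add_add_self, inner_sub_sub_self,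
      real_inner_smul_left, real_inner_smul_right]
    rw [hb1]; ring
  have hmul : Lψ * LD / 2 * (a * ‖x‖ ^ 2 + b * ‖y‖ ^ 2 - ‖a • x + b • y‖ ^ 2)
      = Lψ * LD / 2 * (a * b * ‖x - y‖ ^ 2) := by rw [hid]
  have heq : Lψ * (LD / 2 * (a * b) * ‖x - y‖ ^ 2)
      = Lψ * LD / 2 * (a * b * ‖x - y‖ ^ 2) := by ring
  linarith [hψ, hmul, heq]
end

section
/- Let J : ℝ → ℝ be differentiable with L_{∇J}-Lipschitz derivative, L_J-Lipschitz, and affine on a closed set 𝒟 ⊂ ℝ with complement ℰ. Let 𝓕 : ℝ^d → ℝ be differentiable with L_{D𝓕}-Lipschitz derivative, and suppose ‖D𝓕(v)‖_op ≤ M for all v with 𝓕(v) ∈ ℰ. Then ∇(J ∘ 𝓕) is Lipschitz continuous with constant M²L_{∇J} + L_J L_{D𝓕}. -/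
open Filter Topology

private lemma slope_u (J J' : ℝ → ℝ) (𝒟 : Set ℝ) (u τ : ℝ)
    (hJ' : ∀ t, HasDerivAt J (J' t) t)
    (haff : ∀ z ∈ 𝒟, J z = u * z + τ)
    (ψ : ℝ → ℝ) (v c : ℝ) (hψ : HasDerivAt ψ c v) (hc : c ≠ 0)
    (hmem : ∀ᶠ w in 𝓝 v, ψ w ∈ 𝒟) : J' (ψ v) = u := by
  set a := ψ v with ha
  have ha𝒟 : a ∈ 𝒟 := hmem.self_of_nhds
  have hslope : Tendsto (slope ψ v) (𝓝[≠] v) (𝓝 c) := hasDerivAt_iff_tendsto_slope.1 hψ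
  have hne : ∀ᶠ w in 𝓝[≠] v, ψ w ≠ a := by
    filter_upwards [hslope.eventually_ne hc, self_mem_nhdsWithin] with w hw hwv
    intro h
    apply hw
    rw [slope_def_field, h, ← ha, sub_self, zero_div]
  have hψtend : Tendsto ψ (𝓝[≠] v) (𝓝[≠] a) := by
    rw [tendsto_nhdsWithin_iff]
    exact ⟨hψ.continuousAt.tendsto.mono_left nhdsWithin_le_nhds,
      hne.mono fun w hw => Set.mem_compl_singleton_iff.2 hw⟩
  have hJs : Tendsto (fun w => slope J a (ψ w)) (𝓝[≠] v) (𝓝 (J' a)) :=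
    (hasDerivAt_iff_tendsto_slope.1 (hJ' a)).comp hψtend
  have heq : ∀ᶠ w in 𝓝[≠] v, slope J a (ψ w) = u := by
    filter_upwards [hne, (hmem.filter_mono nhdsWithin_le_nhds)] with w h1 h2
    rw [slope_def_field, haff _ h2, haff _ ha𝒟]
    field_simp [sub_ne_zero.2 h1]
    ring
  exact tendsto_nhds_unique (hJs.congr' heq) tendsto_const_nhds

private lemma cross (J J' : ℝ → ℝ) (𝒟 : Set ℝ) (u τ LJ' L : ℝ)
    (hJ' : ∀ t, HasDerivAt J (J' t) t)
    (hJ'lip : ∀ s t, |J' s - J' t| ≤ LJ' * |s - t|)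
    (haff : ∀ z ∈ 𝒟, J z = u * z + τ)
    (g g' : ℝ → ℝ) (hg : ∀ t, HasDerivAt g (g' t) t) (hg'c : Continuous g')
    (hL : 0 ≤ L) (hLJ' : 0 ≤ LJ')
    (hbound : ∀ t, g t ∉ 𝒟 → |g' t| ≤ L) :
    |J' (g 1) - J' (g 0)| ≤ LJ' * L := by
  have hu : ∀ s, L < |g' s| → J' (g s) = u := by
    intro s hs
    have hopen : IsOpen {r | L < |g' r|} := isOpen_lt continuous_const hg'c.abs
    have hmem : ∀ᶠ w in 𝓝 s, g w ∈ 𝒟 := by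
      filter_upwards [hopen.mem_nhds hs] with w hw
      by_contra h
      exact absurd (hbound w h) (not_le.2 hw)
    refine slope_u J J' 𝒟 u τ hJ' haff g s (g' s) (hg s) ?_ hmem
    intro h
    rw [h] at hs
    simp only [abs_zero] at hs
    linarith
  have hJ'cont : Continuous J' := by
    refine (LipschitzWith.of_dist_le' (K := LJ') ?_).continuous
    intro s t
    rw [Real.dist_eq, Real.dist_eq]
    exact hJ'lip s t
  have hgdiff : Differentiable ℝ g := fun t => (hg t).differentiableAt
  have hgc : Continuous g := hgdiff.continuous
  have hh : Continuous fun t => J' (g t) := hJ'cont.comp hgc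
  have main : ∀ δ > (0:ℝ), |J' (g 1) - J' (g 0)| ≤ LJ' * L + δ := by
    intro δ hδ
    obtain ⟨K, hK⟩ : ∃ K:ℝ, K = LJ' * L + δ := ⟨_, rfl⟩
    have hK0 : 0 ≤ K := by nlinarith [mul_nonneg hLJ' hL]
    set S := {t : ℝ | |J' (g t) - J' (g 0)| ≤ K * t} with hS
    have hclosed : IsClosed (S ∩ Set.Icc 0 1) := by
      refine IsClosed.inter ?_ isClosed_Icc
      exact isClosed_le ((hh.sub continuous_const).abs) (continuous_const.mul continuous_id)
    have h0 : (0:ℝ) ∈ S := by simp [hS]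
    have hstep : ∀ t ∈ S ∩ Set.Ico (0:ℝ) 1, ∀ z ∈ Set.Ioi t, (S ∩ Set.Ioc t z).Nonempty := by
      rintro t ⟨htS, ht0, ht1⟩ z hz
      rw [Set.mem_Ioi] at hz
      rcases le_or_gt |g' t| L with hcase | hcase
      · obtain ⟨L'', hL''⟩ : ∃ L'':ℝ, L'' = L + δ / (LJ' + 1) := ⟨_, rfl⟩
        have hdp : 0 < δ / (LJ' + 1) := div_pos hδ (by linarith)
        have hL''lt : |g' t| < L'' := lt_of_le_of_lt hcase (by linarith)
        have hopen : IsOpen {r | |g' r| < L''} := isOpen_lt hg'c.abs continuous_const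
        obtain ⟨ε, hε, hball⟩ := Metric.isOpen_iff.1 hopen t hL''lt
        obtain ⟨rr, hrr⟩ : ∃ rr:ℝ, rr = min z (t + ε / 2) := ⟨_, rfl⟩
        have hrr1 : t < rr := by rw [hrr]; exact lt_min hz (by linarith)
        refine ⟨rr, ?_, hrr1, by rw [hrr]; exact min_le_left _ _⟩
        have hsub : ∀ w ∈ Set.Icc t rr, |g' w| ≤ L'' := by
          intro w hw
          refine le_of_lt (hball ?_)
          rw [Metric.mem_ball, Real.dist_eq, abs_of_nonneg (by linarith [hw.1])]
          have h1 : w ≤ t + ε / 2 := hw.2.trans (by rw [hrr]; exact min_le_right _ _)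
          linarith
        have hmvt : |g rr - g t| ≤ L'' * (rr - t) := by
          have := norm_image_sub_le_of_norm_deriv_le_segment'
            (f := g) (f' := g') (a := t) (b := rr) (C := L'')
            (fun w _ => (hg w).hasDerivWithinAt)
            (fun w hw => by
              rw [Real.norm_eq_abs]; exact hsub w (Set.Ico_subset_Icc_self hw))
            rr (Set.right_mem_Icc.2 hrr1.le)
          simpa [Real.norm_eq_abs] using this
        have h1 : |J' (g rr) - J' (g t)| ≤ LJ' * (L'' * (rr - t)) :=
          (hJ'lip _ _).trans (mul_le_mul_of_nonneg_left hmvt hLJ')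
        have h2 : LJ' * L'' ≤ K := by
          have hq : δ / (LJ' + 1) * (LJ' + 1) = δ := div_mul_cancel₀ _ (by linarith)
          nlinarith [hLJ', hδ.le, hdp.le]
        have h3 : LJ' * (L'' * (rr - t)) ≤ K * (rr - t) := by
          rw [← mul_assoc]
          exact mul_le_mul_of_nonneg_right h2 (by linarith)
        show |J' (g rr) - J' (g 0)| ≤ K * rr
        calc |J' (g rr) - J' (g 0)|
            ≤ |J' (g rr) - J' (g t)| + |J' (g t) - J' (g 0)| := abs_sub_le _ _ _
          _ ≤ K * (rr - t) + K * t := add_le_add (h1.trans h3) htS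
          _ = K * rr := by ring
      · have hopen : IsOpen {r | L < |g' r|} := isOpen_lt continuous_const hg'c.abs
        obtain ⟨ε, hε, hball⟩ := Metric.isOpen_iff.1 hopen t hcase
        obtain ⟨rr, hrr⟩ : ∃ rr:ℝ, rr = min z (t + ε / 2) := ⟨_, rfl⟩
        have hrr1 : t < rr := by rw [hrr]; exact lt_min hz (by linarith)
        refine ⟨rr, ?_, hrr1, by rw [hrr]; exact min_le_left _ _⟩
        have hrrmem : rr ∈ Metric.ball t ε := by
          rw [Metric.mem_ball, Real.dist_eq, abs_of_nonneg (by linarith)]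
          have h1 : rr ≤ t + ε / 2 := by rw [hrr]; exact min_le_right _ _
          linarith
        have h1 : J' (g rr) = u := hu rr (hball hrrmem)
        have h2 : J' (g t) = u := hu t hcase
        show |J' (g rr) - J' (g 0)| ≤ K * rr
        rw [h1, ← h2]
        exact htS.trans (mul_le_mul_of_nonneg_left hrr1.le hK0)
    have hsubset := IsClosed.Icc_subset_of_forall_exists_gt hclosed h0 hstep
    have h1 : (1:ℝ) ∈ S := hsubset (Set.right_mem_Icc.2 zero_le_one)
    simpa [hS, hK] using h1
  exact le_of_forall_pos_le_add main

theorem stmt7 {d : ℕ} (J J' : ℝ → ℝ) (𝒟 : Set ℝ)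
    (𝓕 : EuclideanSpace ℝ (Fin d) → ℝ)
    (D : EuclideanSpace ℝ (Fin d) → (EuclideanSpace ℝ (Fin d) →L[ℝ] ℝ))
    (LJ' LJ LD M : ℝ)
    (hJ' : ∀ t, HasDerivAt J (J' t) t)
    (hJ'lip : ∀ s t, |J' s - J' t| ≤ LJ' * |s - t|)
    (hJlip : ∀ s t, |J s - J t| ≤ LJ * |s - t|)
    (h𝒟 : IsClosed 𝒟)
    (haff : ∃ u τ : ℝ, ∀ z ∈ 𝒟, J z = u * z + τ)
    (hF : ∀ x, HasFDerivAt 𝓕 (D x) x)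
    (hDlip : ∀ x y, ‖D x - D y‖ ≤ LD * ‖x - y‖)
    (hM : ∀ v, 𝓕 v ∈ 𝒟ᶜ → ‖D v‖ ≤ M) :
    ∀ x y, ‖J' (𝓕 x) • D x - J' (𝓕 y) • D y‖ ≤ (M ^ 2 * LJ' + LJ * LD) * ‖x - y‖ := by
  obtain ⟨u, τ, haff⟩ := haff
  intro x y
  rcases eq_or_ne x y with rfl | hxy
  · simp
  have hxy' : (0:ℝ) < ‖x - y‖ := by
    rw [norm_pos_iff]
    exact sub_ne_zero.2 hxy
  have hLD : 0 ≤ LD := by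
    have h1 : (0:ℝ) * ‖x - y‖ ≤ LD * ‖x - y‖ := by
      rw [zero_mul]; exact (norm_nonneg _).trans (hDlip x y)
    exact le_of_mul_le_mul_right h1 hxy'
  have hLJ' : 0 ≤ LJ' := by
    have := (abs_nonneg (J' 0 - J' 1)).trans (hJ'lip 0 1)
    simpa using this
  have hLJ : 0 ≤ LJ := by
    have := (abs_nonneg (J 0 - J 1)).trans (hJlip 0 1)
    simpa using this
  have hJ'bd : ∀ z, |J' z| ≤ LJ := by
    intro z
    have h1 : Tendsto (slope J z) (𝓝[≠] z) (𝓝 (J' z)) :=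
      hasDerivAt_iff_tendsto_slope.1 (hJ' z)
    have h2 : ∀ᶠ w in 𝓝[≠] z, |slope J z w| ≤ LJ := by
      filter_upwards [self_mem_nhdsWithin] with w hw
      rw [Set.mem_compl_singleton_iff] at hw
      rw [slope_def_field, abs_div, div_le_iff₀ (abs_pos.2 (sub_ne_zero.2 hw))]
      exact hJlip w z
    exact le_of_tendsto h1.abs h2
  have hDcont : Continuous D := by
    refine (LipschitzWith.of_dist_le' (K := LD) ?_).continuous
    intro a b
    rw [dist_eq_norm, dist_eq_norm]
    exact hDlip a b
  -- if ‖D v‖ > M and D v ≠ 0 then J' (𝓕 v) = u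
  have hkey : ∀ v, M < ‖D v‖ → D v ≠ 0 → J' (𝓕 v) = u := by
    intro v hv hv0
    obtain ⟨e, he⟩ : ∃ e, D v e ≠ 0 := by
      by_contra h
      push_neg at h
      exact hv0 (ContinuousLinearMap.ext h)
    obtain ⟨r, hr⟩ : ∃ r:ℝ, r = (‖D v‖ - M) / (LD + 1) := ⟨_, rfl⟩
    have hrpos : 0 < r := by rw [hr]; exact div_pos (by linarith) (by linarith)
    have hball : ∀ w, ‖w - v‖ < r → 𝓕 w ∈ 𝒟 := by
      intro w hw
      by_contra hwD
      have h1 : ‖D w‖ ≤ M := hM w hwD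
      have h2 : ‖D v‖ - ‖D w‖ ≤ LD * ‖v - w‖ := (norm_sub_norm_le _ _).trans (hDlip v w)
      have h3 : ‖v - w‖ < r := by rwa [norm_sub_rev]
      have h4 : (LD + 1) * r = ‖D v‖ - M := by
        rw [hr]; field_simp
      nlinarith [norm_nonneg (v - w)]
    have hline : ∀ t : ℝ, HasDerivAt (fun t : ℝ => v + t • e) e t := by
      intro t
      simpa using ((hasDerivAt_id t).smul_const e).const_add v
    have hψ : HasDerivAt (fun t : ℝ => 𝓕 (v + t • e)) (D v e) 0 := by
      have h := (hF (v + (0:ℝ) • e)).comp_hasDerivAt 0 (hline 0)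
      simp only [zero_smul, add_zero] at h; exact h
    have hmem : ∀ᶠ t in 𝓝 (0:ℝ), 𝓕 (v + t • e) ∈ 𝒟 := by
      have hpos : 0 < r / (‖e‖ + 1) := div_pos hrpos (by positivity)
      filter_upwards [Metric.ball_mem_nhds (0:ℝ) hpos] with t ht
      rw [Metric.mem_ball, Real.dist_eq, sub_zero] at ht
      refine hball _ ?_
      have h1 : ‖v + t • e - v‖ = |t| * ‖e‖ := by
        rw [add_sub_cancel_left, norm_smul, Real.norm_eq_abs]
      rw [h1]
      have h2 : |t| * ‖e‖ ≤ |t| * (‖e‖ + 1) := by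
        nlinarith [abs_nonneg t]
      have h3 : |t| * (‖e‖ + 1) < r := by
        rw [lt_div_iff₀ (by positivity : (0:ℝ) < ‖e‖ + 1)] at ht
        linarith
      linarith
    have := slope_u J J' 𝒟 u τ hJ' haff (fun t : ℝ => 𝓕 (v + t • e)) 0 (D v e) hψ he hmem
    simpa using this
  set a := 𝓕 x with haa
  set b := 𝓕 y with hbb
  have hd1 : J' a • D x - J' b • D y = (J' a - J' b) • D x + J' b • (D x - D y) := by
    module
  have hd2 : J' a • D x - J' b • D y = J' a • (D x - D y) + (J' a - J' b) • D y := by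
    module
  have hterm2 : ∀ c : ℝ, |c| ≤ LJ → ‖c • (D x - D y)‖ ≤ LJ * (LD * ‖x - y‖) := by
    intro c hc
    refine (norm_smul_le c (D x - D y)).trans ?_
    rw [Real.norm_eq_abs]
    exact mul_le_mul hc (hDlip x y) (norm_nonneg _) hLJ
  have hRHS : (M ^ 2 * LJ' + LJ * LD) * ‖x - y‖
      = M ^ 2 * LJ' * ‖x - y‖ + LJ * (LD * ‖x - y‖) := by ring
  have hcross : 0 ≤ M → |J' b - J' a| ≤ LJ' * (M * ‖x - y‖) := by
    intro hm
    set γ : ℝ → EuclideanSpace ℝ (Fin d) := fun t => x + t • (y - x) with hγdef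
    have hγ : ∀ t : ℝ, HasDerivAt γ (y - x) t := by
      intro t
      have := ((hasDerivAt_id t).smul_const (y - x)).const_add x; rw [one_smul] at this; exact this
    have hγc : Continuous γ := by
      exact continuous_const.add (continuous_id.smul continuous_const)
    have hg : ∀ t, HasDerivAt (fun s => 𝓕 (γ s)) (D (γ t) (y - x)) t :=
      fun t => (hF (γ t)).comp_hasDerivAt t (hγ t)
    have hg'c : Continuous fun t => D (γ t) (y - x) :=
      (hDcont.comp hγc).clm_apply continuous_const
    have hbound : ∀ t, 𝓕 (γ t) ∉ 𝒟 → |D (γ t) (y - x)| ≤ M * ‖x - y‖ := by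
      intro t ht
      have h1 : ‖D (γ t)‖ ≤ M := hM _ ht
      calc |D (γ t) (y - x)| ≤ ‖D (γ t)‖ * ‖y - x‖ := (D (γ t)).le_opNorm _
        _ ≤ M * ‖y - x‖ := mul_le_mul_of_nonneg_right h1 (norm_nonneg _)
        _ = M * ‖x - y‖ := by rw [norm_sub_rev]
    have h := cross J J' 𝒟 u τ LJ' (M * ‖x - y‖) hJ' hJ'lip haff
      (fun s => 𝓕 (γ s)) (fun t => D (γ t) (y - x)) hg hg'c
      (mul_nonneg hm (norm_nonneg _)) hLJ' hbound
    have hγ0 : γ 0 = x := by simp [hγdef]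
    have hγ1 : γ 1 = y := by simp [hγdef]
    simpa [hγ0, hγ1, haa, hbb] using h
  have hM2 : 0 ≤ M ^ 2 * LJ' * ‖x - y‖ := by positivity
  rcases le_or_gt ‖D x‖ M with hDx | hDx
  · have hm : 0 ≤ M := (norm_nonneg _).trans hDx
    rw [hd1, hRHS]
    refine (norm_add_le _ _).trans (add_le_add ?_ (hterm2 _ (hJ'bd b)))
    refine (norm_smul_le (J' a - J' b) (D x)).trans ?_
    rw [Real.norm_eq_abs, abs_sub_comm]
    calc |J' b - J' a| * ‖D x‖ ≤ LJ' * (M * ‖x - y‖) * M :=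
          mul_le_mul (hcross hm) hDx (norm_nonneg _)
            (by positivity)
      _ = M ^ 2 * LJ' * ‖x - y‖ := by ring
  · rcases le_or_gt ‖D y‖ M with hDy | hDy
    · have hm : 0 ≤ M := (norm_nonneg _).trans hDy
      rw [hd2, hRHS, add_comm (M ^ 2 * LJ' * ‖x - y‖)]
      refine (norm_add_le _ _).trans (add_le_add (hterm2 _ (hJ'bd a)) ?_)
      refine (norm_smul_le (J' a - J' b) (D y)).trans ?_
      rw [Real.norm_eq_abs, abs_sub_comm]
      calc |J' b - J' a| * ‖D y‖ ≤ LJ' * (M * ‖x - y‖) * M :=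
            mul_le_mul (hcross hm) hDy (norm_nonneg _) (by positivity)
        _ = M ^ 2 * LJ' * ‖x - y‖ := by ring
    · rcases eq_or_ne (D x) 0 with h0 | h0
      · rw [hd1, hRHS]
        refine (norm_add_le _ _).trans ?_
        have hz : ‖(J' a - J' b) • D x‖ = 0 := by rw [h0, smul_zero, norm_zero]
        rw [hz]
        linarith [hterm2 _ (hJ'bd b), hM2]
      · rcases eq_or_ne (D y) 0 with h0' | h0'
        · rw [hd2, hRHS]
          refine (norm_add_le _ _).trans ?_
          have hz : ‖(J' a - J' b) • D y‖ = 0 := by rw [h0', smul_zero, norm_zero]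
          rw [hz]
          linarith [hterm2 _ (hJ'bd a), hM2]
        · have h1 : J' a = u := hkey x hDx h0
          have h2 : J' b = u := hkey y hDy h0'
          rw [hd1, h1, h2, sub_self, zero_smul, zero_add, hRHS]
          have := hterm2 u (h2 ▸ hJ'bd b)
          linarith [hM2]
end

section
/- Suppose a sequence of differentiable functions F_k : ℝ^d → ℝ and points x_k satisfy F_{k+1}(x_{k+1}) ≤ F_k(x_k) − c γ_k ‖∇F_k(x_k)‖² + (μ_k − μ_{k+1})L², where c > 0, L ≥ 0, γ_k ≥ δ̄ μ_k/(ϖ₁μ_k + ϖ₂) with δ̄, ϖ₁, ϖ₂ > 0, μ_k ∈ (0, (2η)⁻¹] is nonincreasing, and F_k(x_k) ≥ B − μ_k L² for a lower bound B ∈ ℝ. Then for any k̲ ≤ k̄, min_{k̲ ≤ k ≤ k̄} ‖∇F_k(x_k)‖ ≤ √( C / Σ_{k=k̲}^{k̄} μ_k ) where C := (ϖ₁ + 2ηϖ₂)(F₁(x₁) − B + μ₁L²)/(2ηcδ̄). -/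
open Filter Topology

theorem stmt15 {d : ℕ} (F : ℕ → EuclideanSpace ℝ (Fin d) → ℝ)
    (x : ℕ → EuclideanSpace ℝ (Fin d)) (gF : ℕ → EuclideanSpace ℝ (Fin d))
    (γ μ : ℕ → ℝ) (c L δ ϖ₁ ϖ₂ η B : ℝ)
    (hc : 0 < c) (hL : 0 ≤ L) (hδ : 0 < δ) (hϖ₁ : 0 < ϖ₁) (hϖ₂ : 0 < ϖ₂) (hη : 0 < η)
    (hgrad : ∀ k ≥ 1, HasGradientAt (F k) (gF k) (x k))
    (hμpos : ∀ k ≥ 1, 0 < μ k) (hμub : ∀ k ≥ 1, μ k ≤ (2 * η)⁻¹)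
    (hμmono : ∀ k ≥ 1, μ (k + 1) ≤ μ k)
    (hγ : ∀ k ≥ 1, γ k ≥ δ * μ k / (ϖ₁ * μ k + ϖ₂))
    (hdec : ∀ k ≥ 1,
      F (k + 1) (x (k + 1)) ≤ F k (x k) - c * γ k * ‖gF k‖ ^ 2 + (μ k - μ (k + 1)) * L ^ 2)
    (hlb : ∀ k ≥ 1, F k (x k) ≥ B - μ k * L ^ 2)
    (kl ku : ℕ) (h1 : 1 ≤ kl) (hku : kl ≤ ku) :
    (Finset.Icc kl ku).inf' (Finset.nonempty_Icc.mpr hku) (fun k => ‖gF k‖) ≤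
      Real.sqrt
        ((ϖ₁ + 2 * η * ϖ₂) * (F 1 (x 1) - B + μ 1 * L ^ 2) / (2 * η * c * δ) /
          ∑ k ∈ Finset.Icc kl ku, μ k) := by
  set S := Finset.Icc kl ku with hSdef
  have hS : S.Nonempty := Finset.nonempty_Icc.mpr hku
  set m := S.inf' hS (fun k => ‖gF k‖) with hmdef
  set Φ : ℕ → ℝ := fun k => F k (x k) + μ k * L ^ 2 with hΦdef
  set w : ℕ → ℝ := fun k => c * γ k * ‖gF k‖ ^ 2 with hwdef
  set P : ℝ := ϖ₁ + 2 * η * ϖ₂ with hPdef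
  have hP : 0 < P := by positivity
  -- γ is positive on k ≥ 1
  have hγpos : ∀ k ≥ 1, 0 < γ k := by
    intro k hk
    have hD : 0 < ϖ₁ * μ k + ϖ₂ := by nlinarith [mul_pos hϖ₁ (hμpos k hk)]
    have := hγ k hk
    have : 0 < δ * μ k / (ϖ₁ * μ k + ϖ₂) := by
      apply div_pos _ hD
      exact mul_pos hδ (hμpos k hk)
    linarith [hγ k hk]
  have hwpos : ∀ k ≥ 1, 0 ≤ w k := by
    intro k hk
    have := hγpos k hk
    positivity
  -- per-step decrease of Φ
  have hstep : ∀ k ≥ 1, Φ (k + 1) + w k ≤ Φ k := by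
    intro k hk
    have := hdec k hk
    simp only [hΦdef, hwdef]
    nlinarith [this]
  -- telescoping
  have tele : ∀ a, 1 ≤ a → ∀ n, Φ (a + n) + ∑ k ∈ Finset.Ico a (a + n), w k ≤ Φ a := by
    intro a ha n
    induction n with
    | zero => simp
    | succ n ih =>
      have h1 : a + n ≥ 1 := le_trans ha (Nat.le_add_right a n)
      rw [show a + (n + 1) = (a + n) + 1 from rfl,
        Finset.sum_Ico_succ_top (Nat.le_add_right a n)]
      have := hstep (a + n) h1
      linarith
  -- Φ kl ≤ Φ 1
  have hΦkl : Φ kl ≤ Φ 1 := by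
    have := tele 1 le_rfl (kl - 1)
    rw [show 1 + (kl - 1) = kl from by omega] at this
    have hnn : (0:ℝ) ≤ ∑ k ∈ Finset.Ico 1 kl, w k := by
      apply Finset.sum_nonneg
      intro k hk
      exact hwpos k (Finset.mem_Ico.mp hk).1
    linarith
  -- sum bound over Icc
  have hsumw : ∑ k ∈ S, w k ≤ Φ 1 - B := by
    have ht := tele kl h1 (ku + 1 - kl)
    rw [show kl + (ku + 1 - kl) = ku + 1 from by omega] at ht
    have hlb' := hlb (ku + 1) (by omega)
    have hΦku : B ≤ Φ (ku + 1) := by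
      simp only [hΦdef]; linarith
    have hIcc : Finset.Ico kl (ku + 1) = S := by
      rw [hSdef, Finset.Ico_add_one_right_eq_Icc]
    rw [hIcc] at ht
    linarith
  -- per-term lower bound: 2ηcδ * μ k * ‖g‖² ≤ P * w k
  have hterm : ∀ k ∈ S, 2 * η * c * δ * (μ k * ‖gF k‖ ^ 2) ≤ P * w k := by
    intro k hk
    have hk1 : 1 ≤ k := le_trans h1 (Finset.mem_Icc.mp hk).1
    have hD : 0 < ϖ₁ * μ k + ϖ₂ := by nlinarith [mul_pos hϖ₁ (hμpos k hk1)]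
    have hγ' : δ * μ k ≤ γ k * (ϖ₁ * μ k + ϖ₂) := by
      have := hγ k hk1
      rw [ge_iff_le, div_le_iff₀ hD] at this
      linarith
    have hμ' : 2 * η * μ k ≤ 1 := by
      have h2η : (0:ℝ) < 2 * η := by positivity
      have := mul_le_mul_of_nonneg_left (hμub k hk1) h2η.le
      rwa [mul_inv_cancel₀ h2η.ne'] at this
    -- P ≥ 2η * (ϖ₁ μ k + ϖ₂)
    have hPD : 2 * η * (ϖ₁ * μ k + ϖ₂) ≤ P := by
      simp only [hPdef]
      nlinarith
    have hγk : 0 < γ k := hγpos k hk1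
    have hkey : 2 * η * δ * μ k ≤ γ k * P := by
      nlinarith [mul_le_mul_of_nonneg_left hPD (le_of_lt hγk)]
    simp only [hwdef]
    nlinarith [sq_nonneg ‖gF k‖, mul_le_mul_of_nonneg_right hkey
      (mul_nonneg (le_of_lt hc) (sq_nonneg ‖gF k‖))]
  -- sum of μ‖g‖²
  have hsum2 : 2 * η * c * δ * ∑ k ∈ S, μ k * ‖gF k‖ ^ 2 ≤ P * (Φ 1 - B) := by
    rw [Finset.mul_sum]
    calc ∑ k ∈ S, 2 * η * c * δ * (μ k * ‖gF k‖ ^ 2)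
        ≤ ∑ k ∈ S, P * w k := Finset.sum_le_sum hterm
      _ = P * ∑ k ∈ S, w k := by rw [Finset.mul_sum]
      _ ≤ P * (Φ 1 - B) := by
          exact mul_le_mul_of_nonneg_left hsumw (le_of_lt hP)
  -- m² Σμ ≤ Σ μ‖g‖²
  have hm0 : 0 ≤ m := by
    obtain ⟨j, hj, hjm⟩ := S.exists_mem_eq_inf' hS (fun k => ‖gF k‖)
    rw [hmdef, hjm]
    exact norm_nonneg _
  have hmsum : m ^ 2 * ∑ k ∈ S, μ k ≤ ∑ k ∈ S, μ k * ‖gF k‖ ^ 2 := by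
    rw [Finset.mul_sum]
    apply Finset.sum_le_sum
    intro k hk
    have hk1 : 1 ≤ k := le_trans h1 (Finset.mem_Icc.mp hk).1
    have hmle : m ≤ ‖gF k‖ := Finset.inf'_le _ hk
    have : m ^ 2 ≤ ‖gF k‖ ^ 2 := by nlinarith
    nlinarith [le_of_lt (hμpos k hk1)]
  have hSumPos : 0 < ∑ k ∈ S, μ k := by
    apply Finset.sum_pos
    · intro k hk
      exact hμpos k (le_trans h1 (Finset.mem_Icc.mp hk).1)
    · exact hS
  -- conclude
  apply Real.le_sqrt_of_sq_le
  have h2ηcδ : 0 < 2 * η * c * δ := by positivity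
  rw [div_div, le_div_iff₀ (by positivity)]
  have hΦ1 : Φ 1 = F 1 (x 1) + μ 1 * L ^ 2 := rfl
  nlinarith [hsum2, hmsum, mul_le_mul_of_nonneg_left hmsum (le_of_lt h2ηcδ)]
end
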